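/- Let p, q ≥ 2 be multiplicatively independent integers (p^r ≠ q^s for all positive integers r, s). Then the group ℤ[1/pq] ⋊ ℤ², where ℤ² acts on ℤ[1/pq] by (n,m)·x = p^n q^m x, is icc: every element other than the identity has infinite conjugacy class. -/

import Mathlib

/-- The additive group `ℤ[1/N] = {x ∈ ℚ : x·N^k ∈ ℤ for some k}`. -/
def Zr (N : ℕ) : AddSubgroup ℚ where
  carrier := {x : ℚ | ∃ a : ℤ, ∃ k : ℕ, x * (N : ℚ) ^ k = (a : ℚ)}
  zero_mem' := ⟨0, 0, by norm_num⟩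
  add_mem' := by
    rintro x y ⟨a, k, ha⟩ ⟨b, l, hb⟩
    exact ⟨a * (N : ℤ) ^ l + b * (N : ℤ) ^ k, k + l, by
      push_cast
      rw [pow_add]
      linear_combination ((N : ℚ) ^ l) * ha + ((N : ℚ) ^ k) * hb⟩
  neg_mem' := by
    rintro x ⟨a, k, ha⟩
    exact ⟨-a, k, by push_cast; linear_combination -ha⟩

theorem one_mem_Zr (N : ℕ) : (1 : ℚ) ∈ Zr N := ⟨1, 0, by norm_num⟩

theorem mem_Zr_smul (p q : ℕ) (hp : 2 ≤ p) (hq : 2 ≤ q) (m n : ℤ) {x : ℚ}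
    (hx : x ∈ Zr (p * q)) : (p : ℚ) ^ m * (q : ℚ) ^ n * x ∈ Zr (p * q) := by
  have hp0 : (p : ℚ) ≠ 0 := Nat.cast_ne_zero.mpr (by omega)
  have hq0 : (q : ℚ) ≠ 0 := Nat.cast_ne_zero.mpr (by omega)
  obtain ⟨a, k, ha⟩ := hx
  set j : ℕ := m.natAbs + n.natAbs with hj
  have hm : ((m + j).toNat : ℤ) = m + j := by omega
  have hn : ((n + j).toNat : ℤ) = n + j := by omega
  refine ⟨(p : ℤ) ^ (m + j).toNat * (q : ℤ) ^ (n + j).toNat * a, k + j, ?_⟩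
  have e1 : ((p : ℚ)) ^ ((m + (j : ℤ)).toNat) = (p : ℚ) ^ (m + (j : ℤ)) := by
    rw [← zpow_natCast, hm]
  have e2 : ((q : ℚ)) ^ ((n + (j : ℤ)).toNat) = (q : ℚ) ^ (n + (j : ℤ)) := by
    rw [← zpow_natCast, hn]
  push_cast
  rw [e1, e2, zpow_add₀ hp0, zpow_add₀ hq0, zpow_natCast, zpow_natCast, pow_add]
  push_cast at ha ⊢
  linear_combination ((p : ℚ) ^ m * (q : ℚ) ^ n * ((p : ℚ) * (q : ℚ)) ^ j) * ha

/-- Multiplication by `p^m q^n` as an automorphism of `ℤ[1/pq]`. -/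
noncomputable def scaleEquiv (p q : ℕ) (hp : 2 ≤ p) (hq : 2 ≤ q) (m n : ℤ) :
    Zr (p * q) ≃+ Zr (p * q) where
  toFun x := ⟨(p : ℚ) ^ m * (q : ℚ) ^ n * x, mem_Zr_smul p q hp hq m n x.2⟩
  invFun x := ⟨(p : ℚ) ^ (-m) * (q : ℚ) ^ (-n) * x,
    mem_Zr_smul p q hp hq (-m) (-n) x.2⟩
  left_inv x := by
    have hp0 : (p : ℚ) ≠ 0 := Nat.cast_ne_zero.mpr (by omega)
    have hq0 : (q : ℚ) ≠ 0 := Nat.cast_ne_zero.mpr (by omega)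
    ext
    show (p : ℚ) ^ (-m) * (q : ℚ) ^ (-n) * ((p : ℚ) ^ m * (q : ℚ) ^ n * x) = x
    rw [zpow_neg, zpow_neg]
    field_simp
  right_inv x := by
    have hp0 : (p : ℚ) ≠ 0 := Nat.cast_ne_zero.mpr (by omega)
    have hq0 : (q : ℚ) ≠ 0 := Nat.cast_ne_zero.mpr (by omega)
    ext
    show (p : ℚ) ^ m * (q : ℚ) ^ n * ((p : ℚ) ^ (-m) * (q : ℚ) ^ (-n) * x) = x
    rw [zpow_neg, zpow_neg]
    field_simp
  map_add' x y := by
    ext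
    show (p : ℚ) ^ m * (q : ℚ) ^ n * ((x : ℚ) + y) = _
    push_cast
    ring

/-- The action of `ℤ²` on `ℤ[1/pq]` by multiplication by `p^m q^n`, as a
homomorphism into the automorphism group. -/
noncomputable def scaleHom (p q : ℕ) (hp : 2 ≤ p) (hq : 2 ≤ q) :
    Multiplicative (ℤ × ℤ) →*
      MulAut (Multiplicative (Zr (p * q))) :=
  MonoidHom.mk'
    (fun g => AddEquiv.toMultiplicative
      (scaleEquiv p q hp hq g.toAdd.1 g.toAdd.2))
    (by
      have hp0 : (p : ℚ) ≠ 0 := Nat.cast_ne_zero.mpr (by omega)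
      have hq0 : (q : ℚ) ≠ 0 := Nat.cast_ne_zero.mpr (by omega)
      intro a b
      ext x
      show ((p:ℚ) ^ (a.toAdd.1 + b.toAdd.1) * (q:ℚ) ^ (a.toAdd.2 + b.toAdd.2)
        * ((x.toAdd : ℚ)) : ℚ) = (p:ℚ) ^ a.toAdd.1 * (q:ℚ) ^ a.toAdd.2 *
          ((p:ℚ) ^ b.toAdd.1 * (q:ℚ) ^ b.toAdd.2 * (x.toAdd : ℚ))
      rw [zpow_add₀ hp0, zpow_add₀ hq0]
      ring)

/-- The action of `ℤ` on `ℤ[1/pq]` by multiplication by `(pq)^z`. -/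
noncomputable def etaHom (p q : ℕ) (hp : 2 ≤ p) (hq : 2 ≤ q) :
    Multiplicative ℤ →* MulAut (Multiplicative (Zr (p * q))) :=
  (scaleHom p q hp hq).comp
    (MonoidHom.mk' (fun z => Multiplicative.ofAdd (z.toAdd, z.toAdd))
      (fun _ _ => rfl))

open SemidirectProduct

lemma pq_pow_eq_aux (p q : ℕ) (hp : 2 ≤ p) (hq : 2 ≤ q)
    (hind : ∀ r s : ℕ, 0 < r → 0 < s → p ^ r ≠ q ^ s)
    {a b : ℤ} (ha : 0 < a) (h : (p:ℚ) ^ a = (q:ℚ) ^ b) : False := by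
  have hp1 : (1:ℚ) < p := by exact_mod_cast (by omega : 1 < p)
  have hq1 : (1:ℚ) < q := by exact_mod_cast (by omega : 1 < q)
  have hb : 0 < b := by
    by_contra hb
    push_neg at hb
    have h1 : (1:ℚ) < (p:ℚ) ^ a := one_lt_zpow₀ hp1 ha
    have h2 : (q:ℚ) ^ b ≤ 1 := by
      rcases lt_or_eq_of_le hb with h' | h'
      · exact (zpow_lt_one_of_neg₀ hq1 h').le
      · simp [h']
    rw [h] at h1; linarith
  have key : ((p ^ a.toNat : ℕ) : ℚ) = ((q ^ b.toNat : ℕ) : ℚ) := by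
    push_cast
    rw [← zpow_natCast (p:ℚ), ← zpow_natCast (q:ℚ),
      Int.toNat_of_nonneg ha.le, Int.toNat_of_nonneg hb.le]
    exact h
  exact hind a.toNat b.toNat (by omega) (by omega) (Nat.cast_injective key)

lemma lam_ne_one (p q : ℕ) (hp : 2 ≤ p) (hq : 2 ≤ q)
    (hind : ∀ r s : ℕ, 0 < r → 0 < s → p ^ r ≠ q ^ s)
    (t1 t2 : ℤ) (h : ¬(t1 = 0 ∧ t2 = 0)) :
    (p:ℚ) ^ t1 * (q:ℚ) ^ t2 ≠ 1 := by
  intro heq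
  have hp0 : (0:ℚ) < p := by positivity
  have hq0 : (0:ℚ) < q := by positivity
  have hq1 : (q:ℚ) ≠ 1 := by
    intro h'; have : (q:ℚ) = ((1:ℕ):ℚ) := by simpa using h'
    have := Nat.cast_injective this; omega
  have hqt : (q:ℚ) ^ t2 * (q:ℚ) ^ (-t2) = 1 := by
    rw [← zpow_add₀ hq0.ne']; simp
  have hpq : (p:ℚ) ^ t1 = (q:ℚ) ^ (-t2) := by
    calc (p:ℚ) ^ t1 = (p:ℚ) ^ t1 * ((q:ℚ) ^ t2 * (q:ℚ) ^ (-t2)) := by rw [hqt]; ring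
    _ = ((p:ℚ) ^ t1 * (q:ℚ) ^ t2) * (q:ℚ) ^ (-t2) := by ring
    _ = (q:ℚ) ^ (-t2) := by rw [heq]; ring
  rcases lt_trichotomy t1 0 with h1 | h1 | h1
  · have hpq' : (p:ℚ) ^ (-t1) = (q:ℚ) ^ t2 := by
      rw [zpow_neg, hpq, ← zpow_neg, neg_neg]
    exact pq_pow_eq_aux p q hp hq hind (by omega) hpq'
  · have : (q:ℚ) ^ (0:ℤ) = (q:ℚ) ^ (-t2) := by
      rw [zpow_zero, ← hpq, h1, zpow_zero]
    have h2 : (0:ℤ) = -t2 := zpow_right_injective₀ hq0 hq1 this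
    exact h ⟨h1, by omega⟩
  · exact pq_pow_eq_aux p q hp hq hind h1 hpq

lemma val_phi (p q : ℕ) (hp : 2 ≤ p) (hq : 2 ≤ q)
    (s : Multiplicative (ℤ × ℤ)) (x : Multiplicative (Zr (p * q))) :
    (((scaleHom p q hp hq s x).toAdd : Zr (p * q)) : ℚ)
      = (p:ℚ) ^ (s.toAdd.1) * (q:ℚ) ^ (s.toAdd.2) * ((x.toAdd : Zr (p * q)) : ℚ) := rfl

/-- For multiplicatively independent integers `p, q ≥ 2`, the group
`ℤ[1/pq] ⋊ ℤ²` (with `(m,n)` acting by multiplication by `p^m q^n`) is icc: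
every non-identity element has infinite conjugacy class. -/
theorem stmt_14 (p q : ℕ) (hp : 2 ≤ p) (hq : 2 ≤ q)
    (hind : ∀ r s : ℕ, 0 < r → 0 < s → p ^ r ≠ q ^ s) :
    ∀ g : Multiplicative (Zr (p * q)) ⋊[scaleHom p q hp hq]
        Multiplicative (ℤ × ℤ),
      g ≠ 1 → {h | IsConj g h}.Infinite := by
  intro g hg
  have hp0 : (0:ℚ) < p := by positivity
  have hq0 : (0:ℚ) < q := by positivity
  have hpne1 : (p:ℚ) ≠ 1 := by
    intro h'; have : (p:ℚ) = ((1:ℕ):ℚ) := by simpa using h'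
    have := Nat.cast_injective this; omega
  by_cases ht : g.right = 1
  · -- g.left ≠ 1; conjugate by inr (n, 0)
    have ha : g.left ≠ 1 := by
      intro h'; exact hg (SemidirectProduct.ext h' ht)
    have haq : ((g.left.toAdd : Zr (p * q)) : ℚ) ≠ 0 := by
      intro h0
      apply ha
      have : g.left.toAdd = 0 := Subtype.ext h0
      simpa using this
    set f : ℤ → Multiplicative (Zr (p * q)) ⋊[scaleHom p q hp hq]
        Multiplicative (ℤ × ℤ) :=
      fun n => inr (Multiplicative.ofAdd ((n, 0) : ℤ × ℤ)) * g *
        (inr (Multiplicative.ofAdd ((n, 0) : ℤ × ℤ)))⁻¹ with hf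
    apply Set.infinite_of_injective_forall_mem (f := f)
    · intro n m hnm
      have hleft : (f n).left = (f m).left := by rw [hnm]
      simp only [hf, mul_left, mul_right, inv_left, inv_right, left_inr, right_inr,
        map_one, one_mul, mul_one, inv_one, map_inv] at hleft
      have hval := congrArg (fun z : Multiplicative (Zr (p * q)) =>
        ((z.toAdd : Zr (p * q)) : ℚ)) hleft
      simp only [val_phi] at hval
      have h2 : (p:ℚ) ^ n = (p:ℚ) ^ m := by
        have := mul_right_cancel₀ haq hval
        simpa using this
      exact zpow_right_injective₀ hp0 hpne1 h2
    · intro n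
      exact isConj_iff.mpr ⟨_, rfl⟩
  · -- g.right ≠ 1; conjugate by inl n
    have ht' : ¬(g.right.toAdd.1 = 0 ∧ g.right.toAdd.2 = 0) := by
      rintro ⟨h1, h2⟩
      apply ht
      have : g.right.toAdd = 0 := Prod.ext h1 h2
      simpa using this
    have hlam := lam_ne_one p q hp hq hind g.right.toAdd.1 g.right.toAdd.2 ht'
    set lam : ℚ := (p:ℚ) ^ g.right.toAdd.1 * (q:ℚ) ^ g.right.toAdd.2 with hlamdef
    set b : ℤ → Multiplicative (Zr (p * q)) :=
      fun n => Multiplicative.ofAdd (⟨(n:ℚ), n, 0, by norm_num⟩ : Zr (p * q)) with hb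
    set f : ℤ → Multiplicative (Zr (p * q)) ⋊[scaleHom p q hp hq]
        Multiplicative (ℤ × ℤ) :=
      fun n => inl (b n) * g * (inl (b n))⁻¹ with hf
    apply Set.infinite_of_injective_forall_mem (f := f)
    · intro n m hnm
      have hleft : (f n).left = (f m).left := by rw [hnm]
      simp only [hf, mul_left, mul_right, inv_left, inv_right, left_inl, right_inl,
        map_one, one_mul, mul_one, inv_one, map_inv, MulAut.one_apply] at hleft
      have hval := congrArg (fun z : Multiplicative (Zr (p * q)) =>
        ((z.toAdd : Zr (p * q)) : ℚ)) hleft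
      simp only [toAdd_mul, AddSubgroup.coe_add, val_phi, toAdd_inv,
        AddSubgroup.coe_neg] at hval
      have hbn : ∀ k : ℤ, (((b k).toAdd : Zr (p * q)) : ℚ) = (k : ℚ) := fun k => rfl
      rw [hbn n, hbn m] at hval
      have hnm' : (1 - lam) * (n : ℚ) = (1 - lam) * (m : ℚ) := by
        simp only [hlamdef]
        ring_nf
        ring_nf at hval
        linarith
      have h1lam : (1 : ℚ) - lam ≠ 0 := fun h0 => hlam (by linarith [hlamdef ▸ h0])
      have : (n : ℚ) = (m : ℚ) := mul_left_cancel₀ h1lam hnm'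
      exact_mod_cast this
    · intro n
      exact isConj_iff.mpr ⟨_, rfl⟩
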